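/- If a finitely generated group G satisfies: for every finite index subgroup F of G, the commutator subgroup F' equals F ∩ G', then G' is contained in every finite index subgroup of G. -/

import Mathlib

theorem stmt_4 (G : Type*) [Group G] [Group.FG G]
    (h : ∀ F : Subgroup G, F.FiniteIndex → ⁅F, F⁆ = F ⊓ commutator G) :
    ∀ F : Subgroup G, F.FiniteIndex → commutator G ≤ F := by
  intro F hF g hg
  by_contra hgF
  haveI := hF
  set N := F.normalCore with hN
  haveI hNfi : N.FiniteIndex := F.finiteIndex_normalCore
  set H := N ⊔ Subgroup.zpowers g with hH
  have hHfi : H.FiniteIndex := Subgroup.finiteIndex_of_le le_sup_left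
  have hgH : g ∈ H := Subgroup.mem_sup_right (Subgroup.mem_zpowers g)
  have hgHc : g ∈ ⁅H, H⁆ := by
    rw [h H hHfi]
    exact ⟨hgH, hg⟩
  have hcomm : ⁅H, H⁆ ≤ N := by
    rw [Subgroup.commutator_le]
    intro a ha b hb
    have key : ∀ x ∈ H, (QuotientGroup.mk' N) x ∈ Subgroup.zpowers ((QuotientGroup.mk' N) g) := by
      intro x hx
      have : H.map (QuotientGroup.mk' N) ≤ Subgroup.zpowers ((QuotientGroup.mk' N) g) := by
        rw [hH, Subgroup.map_sup, MonoidHom.map_zpowers]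
        apply sup_le
        · intro y hy
          obtain ⟨z, hz, rfl⟩ := hy
          have : (QuotientGroup.mk' N) z = 1 := by
            rw [← MonoidHom.mem_ker, QuotientGroup.ker_mk']
            exact hz
          rw [this]; exact one_mem _
        · exact le_rfl
      exact this (Subgroup.mem_map_of_mem _ hx)
    open scoped commutatorElement in
    have hab : ⁅(QuotientGroup.mk' N) a, (QuotientGroup.mk' N) b⁆ = 1 := by
      obtain ⟨m, hm⟩ := key a ha
      obtain ⟨n, hn⟩ := key b hb
      simp only [commutatorElement_def, ← hm, ← hn]
      group
    open scoped commutatorElement in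
    have : (QuotientGroup.mk' N) ⁅a, b⁆ = 1 := by
      rw [map_commutatorElement]; exact hab
    rwa [← MonoidHom.mem_ker, QuotientGroup.ker_mk'] at this
  exact hgF (F.normalCore_le (hcomm hgHc))
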